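/- Define φ_ℓ(r) recursively on (0,∞) by φ_0(r) = r² and φ_{ℓ+1}(r) = (1/sinh r) · φ_ℓ'(r). Then for each ℓ ≥ 1 there exists C > 0 such that |φ_ℓ(r)| ≤ C (1+r) e^{−ℓ r} for all r > 0. -/

import Mathlib

/-- φ_0(r) = r², φ_{ℓ+1}(r) = φ_ℓ'(r) / sinh r. -/
noncomputable def phi : ℕ → ℝ → ℝ
  | 0 => fun r => r ^ 2
  | (ℓ + 1) => fun r => deriv (phi ℓ) r / Real.sinh r

open Real Filter Set

lemma analyticAt_sinh' (x : ℝ) : AnalyticAt ℝ Real.sinh x := by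
  have : Real.sinh = fun y : ℝ => (Real.exp y - Real.exp (-y)) / 2 := by
    funext y; exact Real.sinh_eq y
  rw [this]
  exact ((analyticAt_rexp.sub (analyticAt_rexp.comp (analyticAt_id.neg))).div
    analyticAt_const (by norm_num))

lemma analyticAt_dslope_all {f : ℝ → ℝ} (hf : ∀ x, AnalyticAt ℝ f x) (x : ℝ) :
    AnalyticAt ℝ (dslope f 0) x := by
  rcases eq_or_ne x 0 with rfl | hx
  · obtain ⟨p, hp⟩ := hf 0
    exact ⟨p.fslope, hp.has_fpower_series_dslope_fslope⟩
  · have hcand : AnalyticAt ℝ (fun y : ℝ => (y - 0)⁻¹ * (f y - f 0)) x :=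
      ((analyticAt_id.sub analyticAt_const).inv (by simpa using hx)).mul
        ((hf x).sub analyticAt_const)
    refine hcand.congr ?_
    filter_upwards [eventually_ne_nhds hx] with y hy
    rw [dslope_of_ne _ hy, slope]
    simp [vsub_eq_sub, smul_eq_mul]

lemma dslope_ne {f : ℝ → ℝ} {x : ℝ} (hx : x ≠ 0) (h0 : f 0 = 0) :
    dslope f 0 x = f x / x := by
  rw [dslope_of_ne _ hx]
  simp [slope, h0, div_eq_inv_mul]

-- the dslope of sinh never vanishes
lemma dslope_sinh_ne_zero (x : ℝ) : dslope Real.sinh 0 x ≠ 0 := by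
  rcases eq_or_ne x 0 with rfl | hx
  · rw [dslope_same, Real.deriv_sinh]
    exact (Real.cosh_pos 0).ne'
  · rw [dslope_ne hx Real.sinh_zero]
    rcases lt_or_gt_of_ne hx with h | h
    · exact (div_pos_of_neg_of_neg (Real.sinh_neg_iff.mpr h) h).ne'
    · exact (div_pos (Real.sinh_pos_iff.mpr h) h).ne'

lemma phi_ext (ℓ : ℕ) : ∃ ψ : ℝ → ℝ, (∀ x, AnalyticAt ℝ ψ x) ∧ (∀ x, ψ (-x) = ψ x) ∧
    ∀ x ≠ 0, ψ x = phi ℓ x := by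
  induction ℓ with
  | zero =>
    exact ⟨fun x => x ^ 2, fun x => (analyticAt_id.pow 2), fun x => by ring, fun x _ => rfl⟩
  | succ ℓ ih =>
    obtain ⟨ψ, hψa, hψe, hψφ⟩ := ih
    set f := deriv ψ with hf
    have hfa : ∀ x, AnalyticAt ℝ f x := by
      intro x
      have : AnalyticOnNhd ℝ ψ Set.univ := fun y _ => hψa y
      exact this.deriv x (Set.mem_univ x)
    have hfodd : ∀ x, f (-x) = -f x := by
      intro x
      have h1 : ψ = fun y => ψ (-y) := funext fun y => (hψe y).symm
      have h2 : f x = -f (-x) := by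
        conv_lhs => rw [hf, h1]
        rw [deriv_comp_neg]
      rw [h2, neg_neg]
    have hf0 : f 0 = 0 := by
      have := hfodd 0
      rw [neg_zero] at this
      linarith
    refine ⟨fun x => dslope f 0 x / dslope Real.sinh 0 x, ?_, ?_, ?_⟩
    · intro x
      exact (analyticAt_dslope_all hfa x).div
        (analyticAt_dslope_all analyticAt_sinh' x) (dslope_sinh_ne_zero x)
    · intro x
      rcases eq_or_ne x 0 with rfl | hx
      · rw [neg_zero]
      · show dslope f 0 (-x) / dslope Real.sinh 0 (-x) = dslope f 0 x / dslope Real.sinh 0 x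
        rw [dslope_ne (neg_ne_zero.mpr hx) hf0, dslope_ne (neg_ne_zero.mpr hx) Real.sinh_zero,
          dslope_ne hx hf0, dslope_ne hx Real.sinh_zero, hfodd, Real.sinh_neg,
          neg_div_neg_eq, neg_div_neg_eq]
    · intro x hx
      have hder : deriv (phi ℓ) x = f x := by
        have hev : phi ℓ =ᶠ[nhds x] ψ := by
          filter_upwards [eventually_ne_nhds hx] with y hy
          exact (hψφ y hy).symm
        exact hev.deriv_eq
      have hs : Real.sinh x ≠ 0 := fun h => hx (Real.sinh_eq_zero.mp h)
      show dslope f 0 x / dslope Real.sinh 0 x = phi (ℓ + 1) x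
      rw [dslope_ne hx hf0, dslope_ne hx Real.sinh_zero]
      show f x / x / (Real.sinh x / x) = deriv (phi ℓ) x / Real.sinh x
      rw [hder]
      field_simp

/-- Exponential polynomials with linear coefficients and frequencies bounded by K. -/
inductive IsExpPoly : ℝ → (ℝ → ℝ) → Prop
  | basic (K a b k : ℝ) (hk : |k| ≤ K) :
      IsExpPoly K (fun r => (a * r + b) * Real.exp (k * r))
  | add {K : ℝ} {f g : ℝ → ℝ} : IsExpPoly K f → IsExpPoly K g →
      IsExpPoly K (fun r => f r + g r)
  | mono {K K' : ℝ} {f : ℝ → ℝ} : IsExpPoly K f → K ≤ K' → IsExpPoly K' f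

lemma IsExpPoly.congr {K : ℝ} {f g : ℝ → ℝ} (h : IsExpPoly K f) (hfg : ∀ r, f r = g r) :
    IsExpPoly K g := (funext hfg : f = g) ▸ h

lemma IsExpPoly.deriv' {K : ℝ} {f : ℝ → ℝ} (h : IsExpPoly K f) :
    ∃ f' : ℝ → ℝ, IsExpPoly K f' ∧ ∀ r, HasDerivAt f (f' r) r := by
  induction h with
  | basic K a b k hk =>
    refine ⟨fun r => (a * k * r + (a + b * k)) * Real.exp (k * r),
      IsExpPoly.basic K (a * k) (a + b * k) k hk, fun r => ?_⟩
    have h1 : HasDerivAt (fun r : ℝ => a * r + b) a r := by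
      simpa using ((hasDerivAt_id r).const_mul a).add_const b
    have h2 : HasDerivAt (fun r : ℝ => Real.exp (k * r)) (Real.exp (k * r) * k) r := by
      simpa using (((hasDerivAt_id r).const_mul k).exp)
    have := h1.fun_mul h2
    refine this.congr_deriv ?_
    ring
  | add hf hg ihf ihg =>
    obtain ⟨f', hf', hfd⟩ := ihf
    obtain ⟨g', hg', hgd⟩ := ihg
    exact ⟨fun r => f' r + g' r, hf'.add hg', fun r => (hfd r).add (hgd r)⟩
  | mono h hK ih =>
    obtain ⟨f', hf', hfd⟩ := ih
    exact ⟨f', hf'.mono hK, hfd⟩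

lemma IsExpPoly.mul_sinh {K : ℝ} {f : ℝ → ℝ} (h : IsExpPoly K f) :
    IsExpPoly (K + 1) (fun r => f r * Real.sinh r) := by
  induction h with
  | basic K a b k hk =>
    have h1 : IsExpPoly (K + 1) (fun r => (a / 2 * r + b / 2) * Real.exp ((k + 1) * r)) :=
      IsExpPoly.basic _ _ _ _ (by cases abs_le.mp hk; rw [abs_le]; constructor <;> linarith)
    have h2 : IsExpPoly (K + 1) (fun r => (-(a / 2) * r + -(b / 2)) * Real.exp ((k - 1) * r)) :=
      IsExpPoly.basic _ _ _ _ (by cases abs_le.mp hk; rw [abs_le]; constructor <;> linarith)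
    refine (h1.add h2).congr fun r => ?_
    rw [Real.sinh_eq]
    rw [show (k + 1) * r = k * r + r by ring, show (k - 1) * r = k * r + -r by ring,
      Real.exp_add, Real.exp_add]
    ring
  | add hf hg ihf ihg => exact (ihf.add ihg).congr fun r => by ring
  | mono h hK ih => exact ih.mono (by linarith)

lemma IsExpPoly.mul_cosh {K : ℝ} {f : ℝ → ℝ} (h : IsExpPoly K f) :
    IsExpPoly (K + 1) (fun r => f r * Real.cosh r) := by
  induction h with
  | basic K a b k hk =>
    have h1 : IsExpPoly (K + 1) (fun r => (a / 2 * r + b / 2) * Real.exp ((k + 1) * r)) :=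
      IsExpPoly.basic _ _ _ _ (by cases abs_le.mp hk; rw [abs_le]; constructor <;> linarith)
    have h2 : IsExpPoly (K + 1) (fun r => (a / 2 * r + b / 2) * Real.exp ((k - 1) * r)) :=
      IsExpPoly.basic _ _ _ _ (by cases abs_le.mp hk; rw [abs_le]; constructor <;> linarith)
    refine (h1.add h2).congr fun r => ?_
    rw [Real.cosh_eq]
    rw [show (k + 1) * r = k * r + r by ring, show (k - 1) * r = k * r + -r by ring,
      Real.exp_add, Real.exp_add]
    ring
  | add hf hg ihf ihg => exact (ihf.add ihg).congr fun r => by ring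
  | mono h hK ih => exact ih.mono (by linarith)

lemma IsExpPoly.const_mul {K : ℝ} {f : ℝ → ℝ} (c : ℝ) (h : IsExpPoly K f) :
    IsExpPoly K (fun r => c * f r) := by
  induction h with
  | basic K a b k hk =>
    exact (IsExpPoly.basic K (c * a) (c * b) k hk).congr fun r => by ring
  | add hf hg ihf ihg => exact (ihf.add ihg).congr fun r => by ring
  | mono h hK ih => exact ih.mono hK

lemma IsExpPoly.bound {K : ℝ} {f : ℝ → ℝ} (h : IsExpPoly K f) :
    ∃ C : ℝ, 0 < C ∧ ∀ r : ℝ, 0 ≤ r → |f r| ≤ C * (1 + r) * Real.exp (K * r) := by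
  induction h with
  | basic K a b k hk =>
    refine ⟨|a| + |b| + 1, by positivity, fun r hr => ?_⟩
    have he : Real.exp (k * r) ≤ Real.exp (K * r) :=
      Real.exp_le_exp.mpr (mul_le_mul_of_nonneg_right ((le_abs_self k).trans hk) hr)
    have h1 : |(a * r + b)| ≤ (|a| + |b| + 1) * (1 + r) := by
      calc |(a * r + b)| ≤ |a * r| + |b| := abs_add_le _ _
        _ = |a| * r + |b| := by rw [abs_mul, abs_of_nonneg hr]
        _ ≤ (|a| + |b| + 1) * (1 + r) := by nlinarith [abs_nonneg a, abs_nonneg b]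
    rw [abs_mul, Real.abs_exp]
    calc |a * r + b| * Real.exp (k * r) ≤ ((|a| + |b| + 1) * (1 + r)) * Real.exp (K * r) := by
          apply mul_le_mul h1 he (Real.exp_pos _).le
          positivity
      _ = (|a| + |b| + 1) * (1 + r) * Real.exp (K * r) := by ring
  | @add K' f' g' hf hg ihf ihg =>
    obtain ⟨C1, hC1, h1⟩ := ihf
    obtain ⟨C2, hC2, h2⟩ := ihg
    refine ⟨C1 + C2, by positivity, fun r hr => ?_⟩
    refine (abs_add_le _ _).trans ?_
    have e1 := h1 r hr
    have e2 := h2 r hr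
    nlinarith [e1, e2]
  | @mono K1 K2 f' h hK ih =>
    obtain ⟨C, hC, hb⟩ := ih
    refine ⟨C, hC, fun r hr => (hb r hr).trans ?_⟩
    have he : Real.exp (K1 * r) ≤ Real.exp (K2 * r) :=
      Real.exp_le_exp.mpr (mul_le_mul_of_nonneg_right hK hr)
    have h0 : (0:ℝ) ≤ C * (1 + r) := by positivity
    calc C * (1 + r) * Real.exp (K1 * r) ≤ C * (1 + r) * Real.exp (K2 * r) :=
          mul_le_mul_of_nonneg_left he h0

lemma phi_struct (ℓ : ℕ) : ∃ N : ℝ → ℝ, IsExpPoly ℓ N ∧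
    ∀ r : ℝ, r ≠ 0 → phi (ℓ + 1) r = N r / Real.sinh r ^ (2 * ℓ + 1) := by
  induction ℓ with
  | zero =>
    refine ⟨fun r => (2 * r + 0) * Real.exp (0 * r), ?_, fun r hr => ?_⟩
    · simpa using IsExpPoly.basic 0 2 0 0 (by simp)
    · show deriv (phi 0) r / Real.sinh r = _
      have : phi 0 = fun r : ℝ => r ^ 2 := rfl
      rw [this, deriv_pow_field]
      norm_num
  | succ ℓ ih =>
    obtain ⟨N, hN, hrep⟩ := ih
    obtain ⟨N', hN', hNd⟩ := hN.deriv'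
    set M : ℝ → ℝ := fun r =>
      N' r * Real.sinh r + (-(2 * (ℓ : ℝ) + 1)) * (N r * Real.cosh r) with hM
    have hMe : IsExpPoly ((ℓ : ℝ) + 1) M :=
      hN'.mul_sinh.add (hN.mul_cosh.const_mul (-(2 * (ℓ : ℝ) + 1)))
    refine ⟨M, by push_cast; exact hMe, fun r hr => ?_⟩
    have hs : Real.sinh r ≠ 0 := fun h => hr (Real.sinh_eq_zero.mp h)
    have hg : HasDerivAt (fun y => Real.sinh y ^ (2 * ℓ + 1))
        ((2 * (ℓ : ℝ) + 1) * Real.sinh r ^ (2 * ℓ) * Real.cosh r) r := by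
      have := (Real.hasDerivAt_sinh r).fun_pow (2 * ℓ + 1)
      have h2 : 2 * ℓ + 1 - 1 = 2 * ℓ := rfl
      rw [h2] at this
      refine this.congr_deriv ?_
      push_cast; ring
    have hq : HasDerivAt (fun y => N y / Real.sinh y ^ (2 * ℓ + 1))
        ((N' r * Real.sinh r ^ (2 * ℓ + 1) -
          N r * ((2 * (ℓ : ℝ) + 1) * Real.sinh r ^ (2 * ℓ) * Real.cosh r)) /
          (Real.sinh r ^ (2 * ℓ + 1)) ^ 2) r :=
      (hNd r).div hg (pow_ne_zero _ hs)
    have hder : deriv (phi (ℓ + 1)) r =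
        (N' r * Real.sinh r ^ (2 * ℓ + 1) -
          N r * ((2 * (ℓ : ℝ) + 1) * Real.sinh r ^ (2 * ℓ) * Real.cosh r)) /
          (Real.sinh r ^ (2 * ℓ + 1)) ^ 2 := by
      have hev : phi (ℓ + 1) =ᶠ[nhds r] fun y => N y / Real.sinh y ^ (2 * ℓ + 1) := by
        filter_upwards [eventually_ne_nhds hr] with y hy
        exact hrep y hy
      rw [hev.deriv_eq]
      exact hq.deriv
    show deriv (phi (ℓ + 1)) r / Real.sinh r = M r / Real.sinh r ^ (2 * (ℓ + 1) + 1)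
    rw [hder, hM]
    have hexp : 2 * (ℓ + 1) + 1 = (2 * ℓ + 1) + 2 := by ring
    rw [hexp]
    field_simp
    ring

theorem phi_estimate (ℓ : ℕ) (hℓ : 1 ≤ ℓ) :
    ∃ C : ℝ, 0 < C ∧ ∀ r : ℝ, 0 < r →
      |phi ℓ r| ≤ C * (1 + r) * Real.exp (-(ℓ : ℝ) * r) := by
  obtain ⟨j, rfl⟩ : ∃ j, ℓ = j + 1 := ⟨ℓ - 1, (Nat.succ_pred_eq_of_pos hℓ).symm⟩
  -- small r : bound via the analytic extension
  obtain ⟨ψ, hψa, -, hψφ⟩ := phi_ext (j + 1)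
  obtain ⟨C0, hC0b⟩ := (isCompact_Icc (a := (0:ℝ)) (b := 1)).exists_bound_of_continuousOn
    (fun x _ => (hψa x).continuousAt.continuousWithinAt)
  have hC0 : 0 ≤ C0 := (norm_nonneg (ψ 1)).trans (hC0b 1 (by norm_num))
  -- large r : bound via the exponential polynomial structure
  obtain ⟨N, hN, hrep⟩ := phi_struct j
  obtain ⟨C1, hC1, hNb⟩ := hN.bound
  set m : ℕ := 2 * j + 1 with hm
  refine ⟨C1 * 3 ^ m + (C0 + 1) * Real.exp (j + 1), by positivity, fun r hr => ?_⟩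
  set ℓ' : ℝ := (j : ℝ) + 1 with hℓ'
  have hcast : ((j + 1 : ℕ) : ℝ) = ℓ' := by push_cast; rfl
  rw [hcast]
  have hx : (0:ℝ) < (1 + r) * Real.exp (-ℓ' * r) := by positivity
  rcases le_or_gt r 1 with hr1 | hr1
  · -- small r
    have h1 : |phi (j + 1) r| ≤ C0 := by
      rw [← hψφ r hr.ne']
      simpa using hC0b r ⟨hr.le, hr1⟩
    have h2 : (1:ℝ) ≤ Real.exp ℓ' * Real.exp (-ℓ' * r) := by
      rw [← Real.exp_add]
      refine Real.one_le_exp ?_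
      have : 0 ≤ ℓ' * (1 - r) := mul_nonneg (by positivity) (by linarith)
      nlinarith
    have hPpos : 0 < Real.exp ℓ' * Real.exp (-ℓ' * r) := by positivity
    have h3 : C0 ≤ (C0 + 1) * Real.exp ℓ' * (1 + r) * Real.exp (-ℓ' * r) := by
      nlinarith [mul_le_mul_of_nonneg_left h2 (by linarith : (0:ℝ) ≤ C0 + 1),
        mul_nonneg (mul_nonneg (by linarith : (0:ℝ) ≤ C0 + 1) hPpos.le) hr.le]
    refine h1.trans (h3.trans ?_)
    have hpos : (0:ℝ) < C1 * 3 ^ m := by positivity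
    nlinarith [mul_pos hpos hx]
  · -- large r
    have hrpos : (0:ℝ) ≤ r := hr.le
    have hE : (0:ℝ) < Real.exp r := Real.exp_pos r
    have hsinh : Real.exp r / 3 ≤ Real.sinh r := by
      rw [Real.sinh_eq, Real.exp_neg]
      have h3 : (3:ℝ) ≤ Real.exp r * Real.exp r := by
        have := Real.add_one_le_exp (2 * r)
        rw [show (2:ℝ) * r = r + r by ring, Real.exp_add] at this
        linarith
      have hinv : Real.exp r * (Real.exp r)⁻¹ = 1 := mul_inv_cancel₀ hE.ne'
      nlinarith
    have hspos : 0 < Real.sinh r := Real.sinh_pos_iff.mpr hr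
    have hden : (Real.exp r / 3) ^ m ≤ Real.sinh r ^ m :=
      pow_le_pow_left₀ (by positivity) hsinh m
    have habs : |phi (j + 1) r| = |N r| / Real.sinh r ^ m := by
      rw [hrep r hr.ne', abs_div, abs_of_pos (pow_pos hspos m)]
    have hnum : |N r| ≤ C1 * (1 + r) * Real.exp (j * r) := hNb r hrpos
    have hkey : |phi (j + 1) r| ≤ (C1 * (1 + r) * Real.exp (j * r)) / (Real.exp r / 3) ^ m := by
      rw [habs]
      exact div_le_div₀ (by positivity) hnum (by positivity) hden
    have hEpow : (Real.exp r / 3) ^ m = Real.exp ((m : ℝ) * r) / 3 ^ m := by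
      rw [div_pow, ← Real.exp_nat_mul]
    have hsplit : Real.exp ((j : ℝ) * r) = Real.exp (-ℓ' * r) * Real.exp ((m : ℝ) * r) := by
      rw [← Real.exp_add]; congr 1; rw [hℓ', hm]; push_cast; ring
    have heq : C1 * (1 + r) * Real.exp ((j : ℝ) * r) / (Real.exp r / 3) ^ m
        = (C1 * 3 ^ m) * (1 + r) * Real.exp (-ℓ' * r) := by
      rw [hEpow, hsplit]
      have h0 : Real.exp ((m : ℝ) * r) ≠ 0 := (Real.exp_pos _).ne'
      field_simp
    have hbig := hkey.trans_eq heq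
    have hterm : 0 ≤ (C0 + 1) * Real.exp ℓ' * ((1 + r) * Real.exp (-ℓ' * r)) :=
      mul_nonneg (mul_nonneg (by linarith) (Real.exp_pos ℓ').le) hx.le
    nlinarith [hbig, hterm]
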